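/- Let f be given by a unitary realization over the polydisk as in the Schur–Agler setup, f(z) = A + B Δ(z)(I - D Δ(z))^{-1} C with unitary V = [[A,B],[C,D]] on C ⊕ H, H = ⊕_j H_j. Suppose λ ∈ T^d (i.e., |λ_j| = 1 for all j) is such that the radial limit f†(λ) := lim_{r→1} f(rλ) exists and |f†(λ)| < 1. Then λ is a diagonal approximate eigenvalue of D*: there exist unit vectors v_k ∈ H with ‖D* v_k - Δ(λ) v_k‖ → 0. -/

import Mathlib

set_option maxHeartbeats 1600000

open ContinuousLinearMap Filter

noncomputable section AuxStmt16
variable {H : Type*} [NormedAddCommGroup H] [InnerProductSpace ℂ H] [CompleteSpace H]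

local notation "⟪" x ", " y "⟫" => @inner ℂ _ _ x y

lemma aux_adjC (C : ℂ →L[ℂ] H) (h : H) : adjoint C h = ⟪C 1, h⟫ := by
  have := ContinuousLinearMap.adjoint_inner_right C (1:ℂ) h
  simpa [RCLike.inner_apply] using this

lemma aux_delta_inner {d : ℕ} (P : Fin d → (H →L[ℂ] H))
    (hPsa : ∀ j, IsSelfAdjoint (P j))
    (hPidem : ∀ j, P j ∘L P j = P j)
    (hPorth : ∀ i j, i ≠ j → P i ∘L P j = 0)
    (hPsum : ∑ j, P j = 1)
    (lam : Fin d → ℂ) (hlam : ∀ j, ‖lam j‖ = 1) (x : H) :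
    ⟪(∑ j, lam j • P j) x, (∑ j, lam j • P j) x⟫ = ⟪x, x⟫ := by
  have hP : ∀ i j, ⟪P i x, P j x⟫ = if i = j then ⟪x, P j x⟫ else 0 := by
    intro i j
    have hadj : adjoint (P i) = P i := ContinuousLinearMap.isSelfAdjoint_iff'.mp (hPsa i)
    have h0 : ⟪P i x, P j x⟫ = ⟪x, (P i ∘L P j) x⟫ := by
      calc ⟪P i x, P j x⟫ = ⟪adjoint (P i) x, P j x⟫ := by rw [hadj]
        _ = ⟪x, P i (P j x)⟫ := ContinuousLinearMap.adjoint_inner_left (P i) (P j x) x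
        _ = ⟪x, (P i ∘L P j) x⟫ := rfl
    by_cases h : i = j
    · subst h; rw [h0, hPidem, if_pos rfl]
    · rw [h0, hPorth i j h, if_neg h]; simp
  have hone : ∀ j : Fin d, (starRingEnd ℂ) (lam j) * lam j = 1 := by
    intro j
    rw [mul_comm, Complex.mul_conj]
    have : Complex.normSq (lam j) = 1 := by
      have := hlam j
      rw [← Complex.sq_norm, this]; norm_num
    rw [this]; norm_num
  calc ⟪(∑ j, lam j • P j) x, (∑ j, lam j • P j) x⟫
      = ∑ i, ∑ j, (starRingEnd ℂ) (lam i) * (lam j * ⟪P i x, P j x⟫) := by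
        simp only [ContinuousLinearMap.sum_apply, ContinuousLinearMap.smul_apply, sum_inner,
          inner_sum, inner_smul_left, inner_smul_right, Finset.mul_sum]
        rw [Finset.sum_comm]
        exact Finset.sum_congr rfl fun i _ => Finset.sum_congr rfl fun j _ => by ring
    _ = ∑ i, ∑ j, (if i = j then (starRingEnd ℂ) (lam i) * (lam j * ⟪x, P j x⟫) else 0) := by
        refine Finset.sum_congr rfl fun i _ => Finset.sum_congr rfl fun j _ => ?_
        rw [hP i j]; split <;> simp
    _ = ∑ j, (starRingEnd ℂ) (lam j) * (lam j * ⟪x, P j x⟫) := by simp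
    _ = ∑ j, ⟪x, P j x⟫ := by
        refine Finset.sum_congr rfl fun j _ => ?_
        rw [← mul_assoc, hone j, one_mul]
    _ = ⟪x, x⟫ := by
        rw [← inner_sum, ← ContinuousLinearMap.sum_apply, hPsum, ContinuousLinearMap.one_apply]

lemma aux_delta_norm {d : ℕ} (P : Fin d → (H →L[ℂ] H))
    (hPsa : ∀ j, IsSelfAdjoint (P j))
    (hPidem : ∀ j, P j ∘L P j = P j)
    (hPorth : ∀ i j, i ≠ j → P i ∘L P j = 0)
    (hPsum : ∑ j, P j = 1)
    (lam : Fin d → ℂ) (hlam : ∀ j, ‖lam j‖ = 1) (x : H) :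
    ‖(∑ j, lam j • P j) x‖ = ‖x‖ := by
  have h := aux_delta_inner P hPsa hPidem hPorth hPsum lam hlam x
  rw [inner_self_eq_norm_sq_to_K, inner_self_eq_norm_sq_to_K] at h
  have h2 : ‖(∑ j, lam j • P j) x‖^2 = ‖x‖^2 := by exact_mod_cast h
  have := congrArg Real.sqrt h2
  rwa [Real.sqrt_sq (norm_nonneg _), Real.sqrt_sq (norm_nonneg _)] at this

lemma aux_BD (B : H →L[ℂ] ℂ) (D : H →L[ℂ] H)
    (h4 : ∀ h : H, adjoint B (B h) + adjoint D (D h) = h) (x : H) :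
    ‖B x‖^2 + ‖D x‖^2 = ‖x‖^2 := by
  have h : ⟪x, adjoint B (B x) + adjoint D (D x)⟫ = ⟪x, x⟫ := by rw [h4]
  rw [inner_add_right, ContinuousLinearMap.adjoint_inner_right,
    ContinuousLinearMap.adjoint_inner_right, inner_self_eq_norm_sq_to_K,
    inner_self_eq_norm_sq_to_K, inner_self_eq_norm_sq_to_K] at h
  exact_mod_cast h


lemma aux_main {d : ℕ} (P : Fin d → (H →L[ℂ] H))
    (hPsa : ∀ j, IsSelfAdjoint (P j))
    (hPidem : ∀ j, P j ∘L P j = P j)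
    (hPorth : ∀ i j, i ≠ j → P i ∘L P j = 0)
    (hPsum : ∑ j, P j = 1)
    (A : ℂ) (B : H →L[ℂ] ℂ) (C : ℂ →L[ℂ] H) (D : H →L[ℂ] H)
    (h1 : star A * A + adjoint C (C 1) = 1)
    (h2 : ∀ h : H, star A * B h + adjoint C (D h) = 0)
    (h3 : adjoint B A + adjoint D (C 1) = 0)
    (h4 : ∀ h : H, adjoint B (B h) + adjoint D (D h) = h)
    (f : (Fin d → ℂ) → ℂ)
    (hf : ∀ z : Fin d → ℂ,
      f z = A + B ((∑ j, z j • P j)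
        (Ring.inverse (1 - D ∘L (∑ j, z j • P j)) (C 1))))
    (lam : Fin d → ℂ) (hlam : ∀ j, ‖lam j‖ = 1)
    (r : ℝ) (hr0 : 0 ≤ r) (hr1 : r < 1) :
    ∃ w : H, ‖w‖^2 * (1 - r^2) = 1 - ‖f ((r:ℂ) • lam)‖^2 ∧
      ‖adjoint D w - (∑ j, lam j • P j) w‖
        ≤ (1 - r) * ‖w‖ + ‖adjoint B‖ * ‖f ((r:ℂ) • lam)‖ := by
  set Δ : H →L[ℂ] H := ∑ j, lam j • P j with hΔdef
  have hΔiso : ∀ x : H, ‖Δ x‖ = ‖x‖ :=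
    aux_delta_norm P hPsa hPidem hPorth hPsum lam hlam
  have hΔle : ‖Δ‖ ≤ 1 :=
    opNorm_le_bound _ zero_le_one (fun x => by rw [hΔiso, one_mul])
  have hDle : ‖D‖ ≤ 1 := by
    refine opNorm_le_bound _ zero_le_one (fun x => ?_)
    rw [one_mul]
    have h := aux_BD B D h4 x
    have h' : ‖D x‖^2 ≤ ‖x‖^2 := by nlinarith [sq_nonneg ‖B x‖]
    calc ‖D x‖ = Real.sqrt (‖D x‖^2) := (Real.sqrt_sq (norm_nonneg _)).symm
      _ ≤ Real.sqrt (‖x‖^2) := Real.sqrt_le_sqrt h'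
      _ = ‖x‖ := Real.sqrt_sq (norm_nonneg _)
  set T : H →L[ℂ] H := D ∘L ((r:ℂ) • Δ) with hTdef
  have hTnorm : ‖T‖ < 1 := by
    calc ‖T‖ ≤ ‖D‖ * ‖(r:ℂ) • Δ‖ := opNorm_comp_le _ _
      _ ≤ 1 * (r * 1) := by
          rw [norm_smul]
          have : ‖(r:ℂ)‖ = r := by
            rw [Complex.norm_real, Real.norm_eq_abs, abs_of_nonneg hr0]
          rw [this]
          exact mul_le_mul hDle (mul_le_mul_of_nonneg_left hΔle hr0) (by positivity) zero_le_one
      _ < 1 := by linarith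
  have hU : IsUnit (1 - T) := ⟨Units.oneSub T hTnorm, rfl⟩
  set w : H := Ring.inverse (1 - T) (C 1) with hwdef
  have hinv : (1 - T) w = C 1 := by
    have h := Ring.mul_inverse_cancel (1 - T) hU
    have h' := congrArg (fun (S : H →L[ℂ] H) => S (C 1)) h
    simpa [ContinuousLinearMap.mul_apply, ContinuousLinearMap.one_apply] using h'
  set g : H := (r:ℂ) • (Δ w) with hgdef
  have hTw : T w = D g := by
    simp [hTdef, hgdef, ContinuousLinearMap.comp_apply, ContinuousLinearMap.smul_apply]
  have hveq : w = C 1 + D g := by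
    have : w - T w = C 1 := by
      rw [← hinv]; simp [ContinuousLinearMap.sub_apply, ContinuousLinearMap.one_apply]
    rw [← hTw]; exact sub_eq_iff_eq_add.mp this
  -- value of f at r • lam
  have hsum : (∑ j, ((r:ℂ) • lam) j • P j) = (r:ℂ) • Δ := by
    rw [hΔdef, Finset.smul_sum]
    refine Finset.sum_congr rfl fun j _ => ?_
    rw [Pi.smul_apply, smul_eq_mul, mul_smul]
  have hfr : f ((r:ℂ) • lam) = A + B g := by
    rw [hf ((r:ℂ) • lam), hsum]
    have : ((r:ℂ) • Δ) (Ring.inverse (1 - D ∘L ((r:ℂ) • Δ)) (C 1)) = g := by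
      rw [hgdef, hwdef, hTdef]
      simp [ContinuousLinearMap.smul_apply]
    rw [this]
  set F : ℂ := f ((r:ℂ) • lam) with hFdef
  clear_value F
  clear_value w g
  -- Identity I
  have e1 : (starRingEnd ℂ) A * A + ⟪C 1, C 1⟫ = 1 := by
    rw [← aux_adjC]; exact h1
  have e2 : (starRingEnd ℂ) A * B g + ⟪C 1, D g⟫ = 0 := by
    rw [← aux_adjC]; exact h2 g
  have e3 : (starRingEnd ℂ) (B g) * A + ⟪D g, C 1⟫ = 0 := by
    have := congrArg (starRingEnd ℂ) e2
    simpa [map_add, map_mul, inner_conj_symm, mul_comm] using this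
  have e4 : (starRingEnd ℂ) (B g) * B g + ⟪D g, D g⟫ = ⟪g, g⟫ := by
    have h : ⟪g, adjoint B (B g) + adjoint D (D g)⟫ = ⟪g, g⟫ := by rw [h4]
    rw [inner_add_right, ContinuousLinearMap.adjoint_inner_right,
      ContinuousLinearMap.adjoint_inner_right, RCLike.inner_apply] at h
    linear_combination h
  have key : (starRingEnd ℂ) F * F + ⟪w, w⟫ = 1 + ⟪g, g⟫ := by
    rw [hfr, hveq, map_add, inner_add_add_self]
    linear_combination e1 + e2 + e3 + e4
  -- real form of Identity I
  have hgw : ‖g‖ = r * ‖w‖ := by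
    rw [hgdef, norm_smul, Complex.norm_real, Real.norm_eq_abs, abs_of_nonneg hr0, hΔiso]
  have keyR : ‖F‖^2 + ‖w‖^2 = 1 + (r * ‖w‖)^2 := by
    have c1 : (starRingEnd ℂ) F * F = ((‖F‖:ℂ))^2 := by
      rw [mul_comm, ← RCLike.inner_apply, inner_self_eq_norm_sq_to_K]; norm_num
    rw [c1, inner_self_eq_norm_sq_to_K, inner_self_eq_norm_sq_to_K, hgw] at key
    have key' : ((‖F‖:ℂ))^2 + ((‖w‖:ℂ))^2 = 1 + (((r * ‖w‖ : ℝ)):ℂ)^2 := key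
    exact_mod_cast key'
  refine ⟨w, by linear_combination keyR, ?_⟩
  -- Identity II
  have hII : adjoint D w + adjoint B F = g := by
    rw [hfr]
    nth_rewrite 1 [hveq]
    rw [map_add, map_add]
    calc adjoint D (C 1) + adjoint D (D g) + (adjoint B A + adjoint B (B g))
        = (adjoint B A + adjoint D (C 1)) + (adjoint B (B g) + adjoint D (D g)) := by abel
      _ = 0 + g := by rw [h3, h4]
      _ = g := zero_add g
  have hdiff : adjoint D w - Δ w = ((r:ℂ) - 1) • Δ w - adjoint B F := by
    have h5 : adjoint D w = g - adjoint B F := by rw [← hII]; abel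
    rw [h5, hgdef, sub_smul, one_smul]
    abel
  rw [hdiff]
  refine (norm_sub_le _ _).trans ?_
  have n1 : ‖((r:ℂ) - 1) • Δ w‖ = (1 - r) * ‖w‖ := by
    rw [norm_smul, hΔiso]
    congr 1
    have : ((r:ℂ) - 1) = ((r - 1 : ℝ) : ℂ) := by push_cast; ring
    rw [this, Complex.norm_real, Real.norm_eq_abs, abs_of_nonpos (by linarith)]
    ring
  rw [n1]
  gcongr
  exact le_opNorm _ _

end AuxStmt16

/-- Polydisk realization, boundary values: if `λ ∈ 𝕋^d`, the radial limit
`f†(λ) = lim_{r→1⁻} f(rλ)` exists and has modulus `< 1`, then `λ` is a diagonal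
approximate eigenvalue of `D*`. -/
theorem stmt16 {H : Type*} [NormedAddCommGroup H] [InnerProductSpace ℂ H] [CompleteSpace H]
    {d : ℕ} (P : Fin d → (H →L[ℂ] H))
    (hPsa : ∀ j, IsSelfAdjoint (P j))
    (hPidem : ∀ j, P j ∘L P j = P j)
    (hPorth : ∀ i j, i ≠ j → P i ∘L P j = 0)
    (hPsum : ∑ j, P j = 1)
    (A : ℂ) (B : H →L[ℂ] ℂ) (C : ℂ →L[ℂ] H) (D : H →L[ℂ] H)
    -- V*V = I on ℂ ⊕ H
    (h1 : star A * A + adjoint C (C 1) = 1)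
    (h2 : ∀ h : H, star A * B h + adjoint C (D h) = 0)
    (h3 : adjoint B A + adjoint D (C 1) = 0)
    (h4 : ∀ h : H, adjoint B (B h) + adjoint D (D h) = h)
    -- V V* = I on ℂ ⊕ H
    (h5 : A * star A + B (adjoint B 1) = 1)
    (h6 : ∀ v : H, A * adjoint C v + B (adjoint D v) = 0)
    (h7 : C (star A) + D (adjoint B 1) = 0)
    (h8 : ∀ v : H, C (adjoint C v) + D (adjoint D v) = v)
    (f : (Fin d → ℂ) → ℂ)
    (hf : ∀ z : Fin d → ℂ,
      f z = A + B ((∑ j, z j • P j)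
        (Ring.inverse (1 - D ∘L (∑ j, z j • P j)) (C 1))))
    (lam : Fin d → ℂ) (hlam : ∀ j, ‖lam j‖ = 1)
    (L : ℂ)
    (hlim : Tendsto (fun r : ℝ => f ((r : ℂ) • lam)) (nhdsWithin 1 (Set.Iio 1)) (nhds L))
    (hL : ‖L‖ < 1) :
    ∃ v : ℕ → H, (∀ k, ‖v k‖ = 1) ∧
      Tendsto (fun k => ‖adjoint D (v k) - (∑ j, lam j • P j) (v k)‖) atTop (nhds 0) := by
  obtain ⟨s, hsdef⟩ : ∃ s : ℕ → ℝ, s = fun k : ℕ => 1 - 1/((k:ℝ)+2) := ⟨_, rfl⟩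
  have hs1 : ∀ k : ℕ, s k < 1 := by
    intro k
    have : 0 < 1/((k:ℝ)+2) := by positivity
    rw [hsdef]; dsimp only; linarith
  have hs0 : ∀ k : ℕ, 0 ≤ s k := by
    intro k
    have h2 : (1:ℝ)/((k:ℝ)+2) ≤ 1 := by
      rw [div_le_one (by positivity)]
      have : (0:ℝ) ≤ (k:ℝ) := Nat.cast_nonneg k
      linarith
    rw [hsdef]; dsimp only; linarith
  have hdiv : Tendsto (fun k : ℕ => 1/((k:ℝ)+2)) atTop (nhds 0) := by
    have h := (tendsto_one_div_add_atTop_nhds_zero_nat (𝕜 := ℝ)).comp (tendsto_add_atTop_nat 1)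
    refine h.congr fun k => ?_
    simp only [Function.comp_apply]
    push_cast
    ring_nf
  have hstend1 : Tendsto s atTop (nhds 1) := by
    rw [hsdef]
    have h2 := (tendsto_const_nhds : Tendsto (fun _ : ℕ => (1:ℝ)) atTop (nhds 1)).sub hdiv
    rw [sub_zero] at h2
    exact h2
  have hstend : Tendsto s atTop (nhdsWithin 1 (Set.Iio 1)) :=
    tendsto_nhdsWithin_of_tendsto_nhds_of_eventually_within _ hstend1
      (Eventually.of_forall (fun k => hs1 k))
  have hFt : Tendsto (fun k => f ((s k : ℂ) • lam)) atTop (nhds L) := hlim.comp hstend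
  set c : ℝ := (1 + ‖L‖)/2 with hcdef
  have hc1 : c < 1 := by rw [hcdef]; linarith
  have hc0 : 0 ≤ c := by rw [hcdef]; positivity
  have hcc : 0 < 1 - c^2 := by nlinarith
  have hLc : ‖L‖ < c := by rw [hcdef]; linarith
  have hev : ∀ᶠ k in atTop, ‖f ((s k : ℂ) • lam)‖ < c :=
    (hFt.norm).eventually_lt_const hLc
  obtain ⟨N, hN⟩ := eventually_atTop.mp hev
  have key : ∀ k : ℕ, ∃ w : H,
      ‖w‖^2 * (1 - (s (k+N))^2) = 1 - ‖f ((s (k+N):ℂ) • lam)‖^2 ∧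
      ‖adjoint D w - (∑ j, lam j • P j) w‖
        ≤ (1 - s (k+N)) * ‖w‖ + ‖adjoint B‖ * ‖f ((s (k+N):ℂ) • lam)‖ :=
    fun k => aux_main P hPsa hPidem hPorth hPsum A B C D h1 h2 h3 h4 f hf lam hlam
      (s (k+N)) (hs0 _) (hs1 _)
  choose w hw1 hw2 using key
  set Fn : ℕ → ℝ := fun k => ‖f ((s (k+N):ℂ) • lam)‖ with hFndef
  have hFlt : ∀ k, Fn k < c := fun k => hN (k+N) (Nat.le_add_left N k)
  have hFn0 : ∀ k, 0 ≤ Fn k := fun k => norm_nonneg _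
  have hwpos : ∀ k, 0 < ‖w k‖ := by
    intro k
    rcases (norm_nonneg (w k)).lt_or_eq with h | h
    · exact h
    · exfalso
      have h1' := hw1 k
      rw [← h] at h1'
      have := hFlt k
      have := hFn0 k
      nlinarith
  set a : ℕ → ℝ := fun k => (‖w k‖)⁻¹ with hadef
  have ha0 : ∀ k, 0 ≤ a k := fun k => inv_nonneg.mpr (norm_nonneg _)
  have haw : ∀ k, a k * ‖w k‖ = 1 := fun k => inv_mul_cancel₀ (ne_of_gt (hwpos k))
  refine ⟨fun k => a k • w k, fun k => ?_, ?_⟩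
  · rw [norm_smul, Real.norm_eq_abs, abs_of_nonneg (ha0 k), haw k]
  · set Δ : H →L[ℂ] H := ∑ j, lam j • P j with hΔdef
    have hnorm : ∀ k, ‖adjoint D (a k • w k) - Δ (a k • w k)‖
        = a k * ‖adjoint D (w k) - Δ (w k)‖ := by
      intro k
      rw [map_smul_of_tower, map_smul_of_tower, ← smul_sub, norm_smul,
        Real.norm_eq_abs, abs_of_nonneg (ha0 k)]
    have bnd : ∀ k, ‖adjoint D (a k • w k) - Δ (a k • w k)‖
        ≤ (1 - s (k+N)) + ‖adjoint B‖ * a k := by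
      intro k
      rw [hnorm k]
      calc a k * ‖adjoint D (w k) - Δ (w k)‖
          ≤ a k * ((1 - s (k+N)) * ‖w k‖ + ‖adjoint B‖ * Fn k) :=
            mul_le_mul_of_nonneg_left (hw2 k) (ha0 k)
        _ = (1 - s (k+N)) * (a k * ‖w k‖) + ‖adjoint B‖ * Fn k * a k := by ring
        _ ≤ (1 - s (k+N)) * (a k * ‖w k‖) + ‖adjoint B‖ * 1 * a k := by
            gcongr
            exact le_of_lt (lt_of_lt_of_le (hFlt k) hc1.le)
        _ = (1 - s (k+N)) + ‖adjoint B‖ * a k := by rw [haw k]; ring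
    have t1 : Tendsto (fun k => s (k+N)) atTop (nhds 1) :=
      hstend1.comp (tendsto_add_atTop_nat N)
    have hasq : ∀ k, a k ^2 * (1 - Fn k^2) = 1 - (s (k+N))^2 := by
      intro k
      linear_combination (-(a k^2)) * (hw1 k)
        + (1 - (s (k+N))^2) * (a k * ‖w k‖ + 1) * (haw k)
    have hasqle : ∀ k, a k^2 ≤ (1 - (s (k+N))^2)/(1-c^2) := by
      intro k
      rw [le_div_iff₀ hcc]
      have hFn2 : Fn k^2 ≤ c^2 := by nlinarith [hFlt k, hFn0 k]
      nlinarith [hasq k, mul_nonneg (sq_nonneg (a k)) (sub_nonneg.2 hFn2)]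
    have hq0 : Tendsto (fun k => (1 - (s (k+N))^2)/(1-c^2)) atTop (nhds 0) := by
      have := ((tendsto_const_nhds : Tendsto (fun _ : ℕ => (1:ℝ)) atTop (nhds 1)).sub
        (t1.pow 2)).div_const (1 - c^2)
      simpa using this
    have hsq0 : Tendsto (fun k => a k ^ 2) atTop (nhds 0) :=
      squeeze_zero (fun k => sq_nonneg _) hasqle hq0
    have haten : Tendsto a atTop (nhds 0) := by
      have h := hsq0.sqrt
      rw [Real.sqrt_zero] at h
      exact h.congr fun k => Real.sqrt_sq (ha0 k)
    have hbt : Tendsto (fun k => (1 - s (k+N)) + ‖adjoint B‖ * a k) atTop (nhds 0) := by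
      have := ((tendsto_const_nhds : Tendsto (fun _ : ℕ => (1:ℝ)) atTop (nhds 1)).sub t1).add
        (haten.const_mul ‖adjoint B‖)
      simpa using this
    exact squeeze_zero (fun k => norm_nonneg _) bnd hbt
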